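/- For ℓ odd, ℓ ≥ 7, in the graph H* (K_{ℓ-2} on v_0,...,v_{ℓ-3} colored c(v_iv_j)=i+j plus v_{ℓ-2} joined to v_{ℓ-3} and v_{ℓ-4} with colors 2ℓ-5 and 2ℓ-6), the intersection of the color sets of all rainbow Hamiltonian paths starting at v_0 is empty. -/

import Mathlib

/-- Color of the pair `{i,j}`: `i+j` within `K_{ℓ-2}` (indices `≤ ℓ-3`); the two special
edges at `v_{ℓ-2}` (index `ℓ-2`) get colors `2ℓ-5`/`2ℓ-6`. -/
def colFun (ℓ i j : ℕ) : ℕ :=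
  if max i j ≤ ℓ - 3 then min i j + max i j
  else (if min i j = ℓ - 3 then 2*ℓ-5 else 2*ℓ-6)

theorem colFun_symm (ℓ i j : ℕ) : colFun ℓ i j = colFun ℓ j i := by
  unfold colFun; simp only [min_comm i j, max_comm i j]

/-- The edge coloring of `H* = H \ x` as a function on unordered pairs of vertices. -/
def colS (ℓ : ℕ) : Sym2 (Fin (ℓ-1)) → ℕ :=
  Sym2.lift ⟨fun i j => colFun ℓ (i : ℕ) (j : ℕ), fun i j => colFun_symm ℓ i j⟩

/-- The graph `H* = H \ x`: `K_{ℓ-2}` on `v_0,…,v_{ℓ-3}` (indices `0,…,ℓ-3`), plus the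
vertex `v_{ℓ-2}` (index `ℓ-2`) joined to `v_{ℓ-3}` and `v_{ℓ-4}`. -/
def HGstar (ℓ : ℕ) : SimpleGraph (Fin (ℓ-1)) :=
  SimpleGraph.fromRel (fun i j =>
    ((i : ℕ) ≤ ℓ - 3 ∧ (j : ℕ) ≤ ℓ - 3) ∨
    ((i : ℕ) = ℓ - 2 ∧ ((j : ℕ) = ℓ - 3 ∨ (j : ℕ) = ℓ - 4)))

namespace Stmt11

def lastD {α : Type*} (a : α) : List α → α
  | [] => a
  | b :: l => lastD b l

@[simp] lemma lastD_nil {α : Type*} (a : α) : lastD a [] = a := rfl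
@[simp] lemma lastD_cons {α : Type*} (a b : α) (l : List α) : lastD a (b :: l) = lastD b l := rfl

def chainPairs {α β : Type*} (f : α → α → β) : α → List α → List β
  | _, [] => []
  | a, b :: l => f a b :: chainPairs f b l

@[simp] lemma chainPairs_nil {α β : Type*} (f : α → α → β) (a : α) : chainPairs f a [] = [] := rfl
@[simp] lemma chainPairs_cons {α β : Type*} (f : α → α → β) (a b : α) (l : List α) :
    chainPairs f a (b :: l) = f a b :: chainPairs f b l := rfl

lemma chainPairs_append {α β : Type*} (f : α → α → β) (a : α) (l1 l2 : List α) :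
    chainPairs f a (l1 ++ l2) = chainPairs f a l1 ++ chainPairs f (lastD a l1) l2 := by
  induction l1 generalizing a with
  | nil => simp
  | cons b l ih => simp [ih]

lemma chainPairs_map {α β γ : Type*} (g : α → β) (f : β → β → γ) (a : α) (l : List α) :
    chainPairs f (g a) (l.map g) = chainPairs (fun x y => f (g x) (g y)) a l := by
  induction l generalizing a <;> simp [*]

lemma map_chainPairs {α β γ : Type*} (h : β → γ) (f : α → α → β) (a : α) (l : List α) :
    (chainPairs f a l).map h = chainPairs (fun x y => h (f x y)) a l := by
  induction l generalizing a <;> simp [*]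

lemma chainPairs_congr {α β : Type*} {f g : α → α → β} : ∀ {a : α} {l : List α},
    (∀ x ∈ a :: l, ∀ y ∈ a :: l, f x y = g x y) → chainPairs f a l = chainPairs g a l
  | _, [], _ => rfl
  | a, b :: l, h => by
    simp only [chainPairs_cons]
    rw [h a (by simp) b (by simp),
      chainPairs_congr (fun x hx y hy => h x (by right; exact hx) y (by right; exact hy))]

lemma chain_append {α : Type*} (r : α → α → Prop) (a : α) (l1 l2 : List α) :
    List.Chain r a (l1 ++ l2) ↔ List.Chain r a l1 ∧ List.Chain r (lastD a l1) l2 := by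
  induction l1 generalizing a with
  | nil => simp [List.Chain.nil]
  | cons b l ih => simp only [List.Chain] at ih ⊢; simp [ih, and_assoc]

def walkFrom {V : Type*} (G : SimpleGraph V) :
    (a : V) → (l : List V) → List.Chain G.Adj a l → G.Walk a (lastD a l)
  | _, [], _ => SimpleGraph.Walk.nil
  | _, _ :: l, h =>
    SimpleGraph.Walk.cons (List.chain_cons.mp h).1 (walkFrom G _ l (List.chain_cons.mp h).2)

lemma support_walkFrom {V : Type*} (G : SimpleGraph V) :
    ∀ (a : V) (l : List V) (h : List.Chain G.Adj a l), (walkFrom G a l h).support = a :: l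
  | _, [], _ => rfl
  | a, b :: l, h => by
    simp only [walkFrom, SimpleGraph.Walk.support_cons, lastD_cons]
    exact congrArg _ (support_walkFrom G b l _)

lemma edges_walkFrom {V : Type*} (G : SimpleGraph V) :
    ∀ (a : V) (l : List V) (h : List.Chain G.Adj a l),
      (walkFrom G a l h).edges = chainPairs (fun x y => s(x, y)) a l
  | _, [], _ => rfl
  | a, b :: l, h => by
    simp only [walkFrom, SimpleGraph.Walk.edges_cons, lastD_cons, chainPairs_cons]
    exact congrArg _ (edges_walkFrom G b l _)

def adjN (ℓ x y : ℕ) : Prop :=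
  x ≠ y ∧ ((x ≤ ℓ-3 ∧ y ≤ ℓ-3) ∨ (x = ℓ-2 ∧ (y = ℓ-3 ∨ y = ℓ-4)) ∨
    (y = ℓ-2 ∧ (x = ℓ-3 ∨ x = ℓ-4)))

lemma adjN_lt {ℓ x y : ℕ} (hℓ : 7 ≤ ℓ) (h : adjN ℓ x y) : x < ℓ-1 ∧ y < ℓ-1 := by
  obtain ⟨-, h⟩ := h
  rcases h with ⟨h1, h2⟩ | ⟨h1, h2 | h2⟩ | ⟨h1, h2 | h2⟩ <;> omega

open Fin.NatCast in
lemma adjN_adj {ℓ x y : ℕ} (hℓ : 7 ≤ ℓ) [NeZero (ℓ-1)] (h : adjN ℓ x y) :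
    (HGstar ℓ).Adj (x : Fin (ℓ-1)) (y : Fin (ℓ-1)) := by
  obtain ⟨hlx, hly⟩ := adjN_lt hℓ h
  obtain ⟨hne, h⟩ := h
  rw [HGstar, SimpleGraph.fromRel_adj]
  rw [Fin.val_cast_of_lt hlx] at *
  constructor
  · intro he
    apply hne
    have := congrArg Fin.val he
    rwa [Fin.val_cast_of_lt hlx, Fin.val_cast_of_lt hly] at this
  · simp only [Fin.val_cast_of_lt hlx, Fin.val_cast_of_lt hly]
    tauto

open Fin.NatCast in
lemma tool (ℓ : ℕ) (hℓ : 7 ≤ ℓ) (k : ℕ) (T : List ℕ)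
    (hlen : T.length = ℓ - 2)
    (hnd : (0 :: T).Nodup)
    (hlt : ∀ x ∈ (0 :: T), x < ℓ - 1)
    (hch : List.Chain (adjN ℓ) 0 T)
    (hcnd : (chainPairs (colFun ℓ) 0 T).Nodup)
    (hk : k ∉ chainPairs (colFun ℓ) 0 T)
    (H : ∀ (w : Fin (ℓ-1)) (p : (HGstar ℓ).Walk ⟨0, Nat.sub_pos_of_lt (by omega)⟩ w),
        p.IsHamiltonian → (p.edges.map (colS ℓ)).Nodup →
        k ∈ p.edges.map (colS ℓ)) : False := by
  haveI : NeZero (ℓ-1) := ⟨by omega⟩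
  have hch' : List.Chain (HGstar ℓ).Adj ((0:ℕ) : Fin (ℓ-1)) (T.map (Nat.cast : ℕ → Fin (ℓ-1))) := by
    show List.IsChain _ (_ :: _); rw [List.isChain_cons_map]
    exact List.Chain.imp (fun x y hxy => adjN_adj hℓ hxy) hch
  have hstart : ((0:ℕ) : Fin (ℓ-1)) = (⟨0, by omega⟩ : Fin (ℓ-1)) := by
    ext; exact Fin.val_cast_of_lt (by omega)
  set p0 := walkFrom (HGstar ℓ) _ _ hch' with hp0
  let p := p0.copy hstart rfl
  have hsupp : p.support = ((0:ℕ) :: T).map (Nat.cast : ℕ → Fin (ℓ-1)) := by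
    simp only [p, SimpleGraph.Walk.support_copy, hp0, support_walkFrom, List.map_cons]
  have hsnd : p.support.Nodup := by
    rw [hsupp]
    exact hnd.map_on (fun x hx y hy hxy => by
      have := congrArg Fin.val hxy
      rwa [Fin.val_cast_of_lt (hlt x hx), Fin.val_cast_of_lt (hlt y hy)] at this)
  have hslen : p.support.length = ℓ - 1 := by
    rw [hsupp, List.length_map, List.length_cons, hlen]; omega
  have hmem : ∀ v : Fin (ℓ-1), v ∈ p.support := by
    have huniv : p.support.toFinset = Finset.univ := by
      apply Finset.eq_univ_of_card
      rw [List.toFinset_card_of_nodup hsnd, hslen, Fintype.card_fin]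
    intro v
    rw [← List.mem_toFinset, huniv]
    exact Finset.mem_univ v
  have ham : p.IsHamiltonian := fun v => List.count_eq_one_of_mem hsnd (hmem v)
  have hcols : p.edges.map (colS ℓ) = chainPairs (colFun ℓ) 0 T := by
    simp only [p, SimpleGraph.Walk.edges_copy, hp0, edges_walkFrom]
    rw [chainPairs_map, map_chainPairs]
    apply chainPairs_congr
    intro x hx y hy
    rw [colS, Sym2.lift_mk]
    show colFun ℓ (((x:ℕ) : Fin (ℓ-1)) : ℕ) (((y:ℕ) : Fin (ℓ-1)) : ℕ) = colFun ℓ x y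
    rw [Fin.val_cast_of_lt (hlt x hx), Fin.val_cast_of_lt (hlt y hy)]
  have := H _ p ham (by rw [hcols]; exact hcnd)
  rw [hcols] at this
  exact hk this


lemma colFun_clique {ℓ x y : ℕ} (hx : x ≤ ℓ-3) (hy : y ≤ ℓ-3) : colFun ℓ x y = x + y := by
  simp only [colFun, Nat.max_def, Nat.min_def]; split_ifs <;> omega

lemma chain_run' (ℓ : ℕ) : ∀ (t s b : ℕ), b < s → s + t ≤ ℓ-2 →
    List.Chain (adjN ℓ) b (List.range' s t)
  | 0, _, _, _, _ => List.Chain.nil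
  | t+1, s, b, hb, h => by
    rw [List.range'_succ]
    exact List.Chain.cons ⟨by omega, Or.inl ⟨by omega, by omega⟩⟩
      (chain_run' ℓ t (s+1) s (by omega) (by omega))

lemma lastD_run : ∀ (t s b : ℕ), t ≠ 0 → lastD b (List.range' s t) = s + t - 1
  | 0, _, _, h => absurd rfl h
  | 1, _, _, _ => rfl
  | t+2, s, b, _ => by
    rw [List.range'_succ, lastD_cons, lastD_run (t+1) (s+1) s (by omega)]
    omega

lemma lastD_run1 (t : ℕ) : lastD 0 (List.range' 1 t) = t := by
  cases t with
  | zero => rfl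
  | succ t => rw [lastD_run _ _ _ (by omega)]; omega

lemma cols_run (ℓ : ℕ) : ∀ (t a : ℕ), a + t ≤ ℓ-3 →
    chainPairs (colFun ℓ) a (List.range' (a+1) t) = (List.range' a t).map (fun i => 2*i+1)
  | 0, _, _ => rfl
  | t+1, a, h => by
    rw [List.range'_succ, List.range'_succ]
    simp only [chainPairs_cons, List.map_cons]
    rw [cols_run ℓ t (a+1) (by omega), colFun_clique (by omega) (by omega)]
    congr 1
    omega

lemma cols_run1 (ℓ t : ℕ) (h : t ≤ ℓ-3) :
    chainPairs (colFun ℓ) 0 (List.range' 1 t) = (List.range' 0 t).map (fun i => 2*i+1) :=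
  cols_run ℓ t 0 (by omega)

lemma cols_run' (ℓ : ℕ) : ∀ (t s b : ℕ), b ≤ ℓ-3 → s + t + 1 ≤ ℓ-2 →
    chainPairs (colFun ℓ) b (List.range' s (t+1)) =
      (b+s) :: (List.range' s t).map (fun i => 2*i+1)
  | 0, s, b, hb, h => by
    rw [List.range'_succ]
    simp only [List.range'_zero, chainPairs_cons, chainPairs_nil, List.map_nil,
      List.cons.injEq, and_true]
    rw [colFun_clique hb (by omega)]
  | t+1, s, b, hb, h => by
    rw [List.range'_succ]
    simp only [chainPairs_cons]
    rw [colFun_clique hb (by omega), cols_run' ℓ t (s+1) s (by omega) (by omega),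
      List.range'_succ]
    simp only [List.map_cons, List.cons.injEq, true_and]
    exact ⟨by omega, trivial⟩

lemma shapeP1 (ℓ k : ℕ) (hℓ : 7 ≤ ℓ)
    (hk1 : ∀ i, i < ℓ-5 → k ≠ 2*i+1) (hk2 : k ≠ 2*ℓ-8) (hk3 : k ≠ 2*ℓ-5) (hk4 : k ≠ 2*ℓ-6)
    (H : ∀ (w : Fin (ℓ-1)) (p : (HGstar ℓ).Walk ⟨0, Nat.sub_pos_of_lt (by omega)⟩ w),
        p.IsHamiltonian → (p.edges.map (colS ℓ)).Nodup →
        k ∈ p.edges.map (colS ℓ)) : False := by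
  have hc : chainPairs (colFun ℓ) 0 (List.range' 1 (ℓ-5) ++ [ℓ-3, ℓ-2, ℓ-4]) =
      (List.range' 0 (ℓ-5)).map (fun i => 2*i+1) ++ [2*ℓ-8, 2*ℓ-5, 2*ℓ-6] := by
    rw [chainPairs_append, cols_run1 ℓ _ (by omega), lastD_run1]
    simp only [chainPairs_cons, chainPairs_nil]
    have e1 : colFun ℓ (ℓ-5) (ℓ-3) = 2*ℓ-8 := by
      simp only [colFun, Nat.max_def, Nat.min_def]; split_ifs <;> omega
    have e2 : colFun ℓ (ℓ-3) (ℓ-2) = 2*ℓ-5 := by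
      simp only [colFun, Nat.max_def, Nat.min_def]; split_ifs <;> omega
    have e3 : colFun ℓ (ℓ-2) (ℓ-4) = 2*ℓ-6 := by
      simp only [colFun, Nat.max_def, Nat.min_def]; split_ifs <;> omega
    rw [e1, e2, e3]
  apply tool ℓ hℓ k (List.range' 1 (ℓ-5) ++ [ℓ-3, ℓ-2, ℓ-4]) ?_ ?_ ?_ ?_ ?_ ?_ H
  case _ => simp [List.length_range']; omega
  case _ =>
    refine List.nodup_cons.mpr ⟨?_, List.Nodup.append (List.nodup_range' ..) ?_ ?_⟩
    · simp only [List.mem_append, List.mem_range'_1, List.mem_cons, List.not_mem_nil,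
        or_false, not_or]
      omega
    · simp only [List.nodup_cons, List.mem_cons, List.not_mem_nil, List.nodup_nil, or_false,
        and_true, not_or, List.mem_singleton, List.nodup_singleton, not_false_eq_true]
      omega
    · intro x hx hy
      simp only [List.mem_range'_1] at hx
      simp only [List.mem_cons, List.not_mem_nil, or_false] at hy
      omega
  case _ =>
    intro x hx
    simp only [List.mem_cons, List.mem_append, List.mem_range'_1, List.not_mem_nil,
      or_false] at hx
    omega
  case _ =>
    rw [chain_append]
    refine ⟨chain_run' ℓ (ℓ-5) 1 0 (by omega) (by omega), ?_⟩
    rw [lastD_run1]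
    exact List.Chain.cons ⟨by omega, Or.inl ⟨by omega, by omega⟩⟩
      (List.Chain.cons ⟨by omega, Or.inr (Or.inr ⟨rfl, Or.inl rfl⟩)⟩
        (List.Chain.cons ⟨by omega, Or.inr (Or.inl ⟨rfl, Or.inr rfl⟩)⟩ List.Chain.nil))
  case _ =>
    rw [hc]
    refine List.Nodup.append (List.Nodup.map (fun a b h => by omega) (List.nodup_range' ..))
      ?_ ?_
    · simp only [List.nodup_cons, List.mem_cons, List.not_mem_nil, List.nodup_nil, or_false,
        and_true, not_or, List.mem_singleton, List.nodup_singleton, not_false_eq_true]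
      omega
    · intro x hx hy
      simp only [List.mem_map, List.mem_range'_1] at hx
      simp only [List.mem_cons, List.not_mem_nil, or_false] at hy
      obtain ⟨i, hi, rfl⟩ := hx
      omega
  case _ =>
    rw [hc]
    intro hm
    simp only [List.mem_append, List.mem_map, List.mem_range'_1, List.mem_cons,
      List.not_mem_nil, or_false] at hm
    rcases hm with ⟨i, hi, he⟩ | h | h | h
    · exact hk1 i (by omega) he.symm
    · exact hk2 h
    · exact hk3 h
    · exact hk4 h

lemma shapeP2 (ℓ k : ℕ) (hℓ : 7 ≤ ℓ) (hk : k = 2*ℓ-5)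
    (H : ∀ (w : Fin (ℓ-1)) (p : (HGstar ℓ).Walk ⟨0, Nat.sub_pos_of_lt (by omega)⟩ w),
        p.IsHamiltonian → (p.edges.map (colS ℓ)).Nodup →
        k ∈ p.edges.map (colS ℓ)) : False := by
  have hc : chainPairs (colFun ℓ) 0 (List.range' 1 (ℓ-7) ++ [ℓ-5, ℓ-3, ℓ-6, ℓ-4, ℓ-2]) =
      (List.range' 0 (ℓ-7)).map (fun i => 2*i+1) ++ [2*ℓ-12, 2*ℓ-8, 2*ℓ-9, 2*ℓ-10, 2*ℓ-6] := by
    rw [chainPairs_append, cols_run1 ℓ _ (by omega), lastD_run1]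
    simp only [chainPairs_cons, chainPairs_nil]
    have e1 : colFun ℓ (ℓ-7) (ℓ-5) = 2*ℓ-12 := by
      simp only [colFun, Nat.max_def, Nat.min_def]; split_ifs <;> omega
    have e2 : colFun ℓ (ℓ-5) (ℓ-3) = 2*ℓ-8 := by
      simp only [colFun, Nat.max_def, Nat.min_def]; split_ifs <;> omega
    have e3 : colFun ℓ (ℓ-3) (ℓ-6) = 2*ℓ-9 := by
      simp only [colFun, Nat.max_def, Nat.min_def]; split_ifs <;> omega
    have e4 : colFun ℓ (ℓ-6) (ℓ-4) = 2*ℓ-10 := by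
      simp only [colFun, Nat.max_def, Nat.min_def]; split_ifs <;> omega
    have e5 : colFun ℓ (ℓ-4) (ℓ-2) = 2*ℓ-6 := by
      simp only [colFun, Nat.max_def, Nat.min_def]; split_ifs <;> omega
    rw [e1, e2, e3, e4, e5]
  apply tool ℓ hℓ k (List.range' 1 (ℓ-7) ++ [ℓ-5, ℓ-3, ℓ-6, ℓ-4, ℓ-2]) ?_ ?_ ?_ ?_ ?_ ?_ H
  case _ => simp [List.length_range']; omega
  case _ =>
    refine List.nodup_cons.mpr ⟨?_, List.Nodup.append (List.nodup_range' ..) ?_ ?_⟩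
    · simp only [List.mem_append, List.mem_range'_1, List.mem_cons, List.not_mem_nil,
        or_false, not_or]
      omega
    · simp only [List.nodup_cons, List.mem_cons, List.not_mem_nil, List.nodup_nil, or_false,
        and_true, not_or, List.mem_singleton, List.nodup_singleton, not_false_eq_true]
      omega
    · intro x hx hy
      simp only [List.mem_range'_1] at hx
      simp only [List.mem_cons, List.not_mem_nil, or_false] at hy
      omega
  case _ =>
    intro x hx
    simp only [List.mem_cons, List.mem_append, List.mem_range'_1, List.not_mem_nil,
      or_false] at hx
    omega
  case _ =>
    rw [chain_append]
    refine ⟨chain_run' ℓ (ℓ-7) 1 0 (by omega) (by omega), ?_⟩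
    rw [lastD_run1]
    exact List.Chain.cons ⟨by omega, Or.inl ⟨by omega, by omega⟩⟩
      (List.Chain.cons ⟨by omega, Or.inl ⟨by omega, by omega⟩⟩
        (List.Chain.cons ⟨by omega, Or.inl ⟨by omega, by omega⟩⟩
          (List.Chain.cons ⟨by omega, Or.inl ⟨by omega, by omega⟩⟩
            (List.Chain.cons ⟨by omega, Or.inr (Or.inr ⟨rfl, Or.inr rfl⟩)⟩ List.Chain.nil))))
  case _ =>
    rw [hc]
    refine List.Nodup.append (List.Nodup.map (fun a b h => by omega) (List.nodup_range' ..))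
      ?_ ?_
    · simp only [List.nodup_cons, List.mem_cons, List.not_mem_nil, List.nodup_nil, or_false,
        and_true, not_or, List.mem_singleton, List.nodup_singleton, not_false_eq_true]
      omega
    · intro x hx hy
      simp only [List.mem_map, List.mem_range'_1] at hx
      simp only [List.mem_cons, List.not_mem_nil, or_false] at hy
      obtain ⟨i, hi, rfl⟩ := hx
      omega
  case _ =>
    rw [hc]
    intro hm
    simp only [List.mem_append, List.mem_map, List.mem_range'_1, List.mem_cons,
      List.not_mem_nil, or_false] at hm
    rcases hm with ⟨i, hi, he⟩ | h | h | h | h | h <;> omega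

lemma shapeQ (ℓ k a : ℕ) (hℓ : 7 ≤ ℓ) (ha1 : 1 ≤ a) (ha2 : a ≤ ℓ-5)
    (hk : k = 2*a-1 ∨ k = 2*a+3 ∨ (k % 2 = 0 ∧ k ≠ 2*a ∧ k ≠ 2*a+2))
    (H : ∀ (w : Fin (ℓ-1)) (p : (HGstar ℓ).Walk ⟨0, Nat.sub_pos_of_lt (by omega)⟩ w),
        p.IsHamiltonian → (p.edges.map (colS ℓ)).Nodup →
        k ∈ p.edges.map (colS ℓ)) : False := by
  have hlast : lastD a (List.range' (a+2) (ℓ-4-a)) = ℓ-3 := by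
    rw [lastD_run _ _ _ (by omega)]; omega
  have hc : chainPairs (colFun ℓ) 0
      (List.range' 1 (a-1) ++ ((a+1) :: a :: (List.range' (a+2) (ℓ-4-a) ++ [ℓ-2]))) =
      (List.range' 0 (a-1)).map (fun i => 2*i+1) ++
        ((2*a) :: (2*a+1) ::
          (((2*a+2) :: (List.range' (a+2) (ℓ-5-a)).map (fun i => 2*i+1)) ++ [2*ℓ-5])) := by
    rw [chainPairs_append, cols_run1 ℓ _ (by omega), lastD_run1]
    simp only [chainPairs_cons]
    rw [chainPairs_append, hlast]
    have e1 : colFun ℓ (a-1) (a+1) = 2*a := by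
      rw [colFun_clique (by omega) (by omega)]; omega
    have e2 : colFun ℓ (a+1) a = 2*a+1 := by
      rw [colFun_clique (by omega) (by omega)]; omega
    have e3 : colFun ℓ (ℓ-3) (ℓ-2) = 2*ℓ-5 := by
      simp only [colFun, Nat.max_def, Nat.min_def]; split_ifs <;> omega
    have e4 : chainPairs (colFun ℓ) a (List.range' (a+2) (ℓ-4-a)) =
        (2*a+2) :: (List.range' (a+2) (ℓ-5-a)).map (fun i => 2*i+1) := by
      rw [show ℓ-4-a = (ℓ-5-a)+1 from by omega, cols_run' ℓ _ _ _ (by omega) (by omega)]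
      congr 1
      omega
    rw [e1, e2, e4]
    simp only [chainPairs_cons, chainPairs_nil]
    rw [e3]
  apply tool ℓ hℓ k
    (List.range' 1 (a-1) ++ ((a+1) :: a :: (List.range' (a+2) (ℓ-4-a) ++ [ℓ-2])))
    ?_ ?_ ?_ ?_ ?_ ?_ H
  case _ => simp [List.length_range']; omega
  case _ =>
    refine List.nodup_cons.mpr ⟨?_, List.Nodup.append (List.nodup_range' ..) ?_ ?_⟩
    · intro hmem
      simp only [List.mem_append, List.mem_range'_1, List.mem_cons, List.not_mem_nil,
        or_false] at hmem
      omega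
    · refine List.nodup_cons.mpr ⟨?_, List.nodup_cons.mpr ⟨?_, ?_⟩⟩
      · intro hmem
        simp only [List.mem_cons, List.mem_append, List.mem_range'_1, List.not_mem_nil,
          or_false] at hmem
        omega
      · intro hmem
        simp only [List.mem_cons, List.mem_append, List.mem_range'_1, List.not_mem_nil,
          or_false] at hmem
        omega
      · refine List.Nodup.append (List.nodup_range' ..) (List.nodup_singleton _) ?_
        intro x hx hy
        simp only [List.mem_range'_1] at hx
        simp only [List.mem_singleton] at hy
        omega
    · intro x hx hy
      simp only [List.mem_range'_1] at hx
      simp only [List.mem_cons, List.mem_append, List.mem_range'_1, List.not_mem_nil,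
        or_false] at hy
      omega
  case _ =>
    intro x hx
    simp only [List.mem_cons, List.mem_append, List.mem_range'_1, List.not_mem_nil,
      or_false] at hx
    omega
  case _ =>
    rw [chain_append]
    refine ⟨chain_run' ℓ (a-1) 1 0 (by omega) (by omega), ?_⟩
    rw [lastD_run1]
    refine List.Chain.cons ⟨by omega, Or.inl ⟨by omega, by omega⟩⟩
      (List.Chain.cons ⟨by omega, Or.inl ⟨by omega, by omega⟩⟩ ?_)
    rw [chain_append, hlast]
    exact ⟨chain_run' ℓ (ℓ-4-a) (a+2) a (by omega) (by omega),
      List.Chain.cons ⟨by omega, Or.inr (Or.inr ⟨rfl, Or.inl rfl⟩)⟩ List.Chain.nil⟩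
  case _ =>
    rw [hc]
    refine List.Nodup.append (List.Nodup.map (fun x y h => by omega) (List.nodup_range' ..))
      ?_ ?_
    · refine List.nodup_cons.mpr ⟨?_, List.nodup_cons.mpr ⟨?_, ?_⟩⟩
      · intro hmem
        simp only [List.mem_cons, List.mem_append, List.mem_map, List.mem_range'_1,
          List.mem_singleton, List.not_mem_nil, or_false] at hmem
        rcases hmem with h | (h | ⟨i, hi, he⟩) | h <;> omega
      · intro hmem
        simp only [List.mem_cons, List.mem_append, List.mem_map, List.mem_range'_1,
          List.mem_singleton, List.not_mem_nil, or_false] at hmem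
        rcases hmem with (h | ⟨i, hi, he⟩) | h <;> omega
      · refine List.Nodup.append (List.nodup_cons.mpr ⟨?_, List.Nodup.map (fun x y h => by omega) (List.nodup_range' ..)⟩) (List.nodup_singleton _) ?_
        · intro hmem
          simp only [List.mem_map, List.mem_range'_1] at hmem
          obtain ⟨i, hi, he⟩ := hmem
          omega
        · intro x hx hy
          simp only [List.mem_cons, List.mem_map, List.mem_range'_1] at hx
          simp only [List.mem_singleton] at hy
          rcases hx with h | ⟨i, hi, he⟩ <;> omega
    · intro x hx hy
      simp only [List.mem_map, List.mem_range'_1] at hx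
      obtain ⟨i, hi, rfl⟩ := hx
      simp only [List.mem_cons, List.mem_append, List.mem_map, List.mem_range'_1,
        List.mem_singleton, List.not_mem_nil, or_false] at hy
      rcases hy with h | h | (h | ⟨j, hj, he⟩) | h <;> omega
  case _ =>
    rw [hc]
    intro hm
    simp only [List.mem_append, List.mem_map, List.mem_range'_1, List.mem_cons,
      List.not_mem_nil, or_false] at hm
    rcases hm with ⟨i, hi, he⟩ | h | h | h | ⟨i, hi, he⟩ | h <;> omega

end Stmt11

/-- for odd `ℓ ≥ 7`, the intersection of the color sets of all rainbow
Hamiltonian paths of `H*` starting at `v_0` is empty. -/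
theorem stmt11 (ℓ : ℕ) (hℓ : 7 ≤ ℓ) (hodd : Odd ℓ) :
    {k : ℕ | ∀ (w : Fin (ℓ-1)) (p : (HGstar ℓ).Walk ⟨0, by omega⟩ w),
        p.IsHamiltonian → (p.edges.map (colS ℓ)).Nodup →
        k ∈ p.edges.map (colS ℓ)} = ∅ := by
  rw [Set.eq_empty_iff_forall_notMem]
  intro k hk
  simp only [Set.mem_setOf_eq] at hk
  rcases Nat.even_or_odd k with he | ho
  · have hke : k % 2 = 0 := Nat.even_iff.mp he
    by_cases h1 : k = 2*ℓ-8 ∨ k = 2*ℓ-6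
    · exact Stmt11.shapeQ ℓ k 1 hℓ le_rfl (by omega)
        (Or.inr (Or.inr ⟨hke, by omega, by omega⟩)) hk
    · exact Stmt11.shapeP1 ℓ k hℓ (fun i hi => by omega) (by omega) (by omega) (by omega) hk
  · have hko : k % 2 = 1 := Nat.odd_iff.mp ho
    by_cases h1 : k ≤ 2*ℓ-11
    · exact Stmt11.shapeQ ℓ k ((k+1)/2) hℓ (by omega) (by omega) (Or.inl (by omega)) hk
    · by_cases h2 : k = 2*ℓ-9
      · exact Stmt11.shapeQ ℓ k (ℓ-6) hℓ (by omega) (by omega) (Or.inr (Or.inl (by omega))) hk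
      · by_cases h3 : k = 2*ℓ-5
        · exact Stmt11.shapeP2 ℓ k hℓ h3 hk
        · exact Stmt11.shapeP1 ℓ k hℓ (fun i hi => by omega) (by omega) h3 (by omega) hk
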